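/- Let X be a topological manifold, let K ⊆ X be a compact connected deformation retract of X, and let (f_k) be a sequence of continuous maps from X to a manifold Y converging uniformly on K to a continuous map f : X → Y. Then for all sufficiently large k, the induced homomorphisms (f_k)_* and f_* on the fundamental group π₁(X, x₀) (with base point x₀ ∈ K) coincide. -/

import Mathlib

open Filter unitInterval

/-- Two loops `a, b : [0,1] → Y` (with matching endpoints) are freely homotopic:
there is a homotopy through loops from `a` to `b`. -/
def FreelyHomotopicLoops {Y : Type*} [TopologicalSpace Y] (a b : unitInterval → Y) : Prop :=
  ∃ H : unitInterval × unitInterval → Y, Continuous H ∧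
    (∀ t, H (0, t) = a t) ∧ (∀ t, H (1, t) = b t) ∧ ∀ s, H (s, 0) = H (s, 1)

section
set_option maxHeartbeats 1000000
open Metric Set

noncomputable section

namespace FHaux


def cl (t : ℝ) : ℝ := max 0 (min 1 t)
lemma cl_continuous : Continuous cl := by unfold cl; fun_prop
lemma cl_of_mem {t : ℝ} (h0 : 0 ≤ t) (h1 : t ≤ 1) : cl t = t := by
  simp [cl, min_eq_right h1, max_eq_right h0]
lemma cl_mem (t : ℝ) : cl t ∈ Icc (0:ℝ) 1 := ⟨le_max_left _ _, by simp [cl]⟩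
lemma cl_cl (t : ℝ) : cl (cl t) = cl t := cl_of_mem (cl_mem t).1 (cl_mem t).2
lemma cl_zero : cl 0 = 0 := cl_of_mem le_rfl zero_le_one
lemma cl_one : cl 1 = 1 := cl_of_mem zero_le_one le_rfl

variable {d' : ℕ} {Y : Type*} [MetricSpace Y]
  [cs : ChartedSpace (EuclideanSpace ℝ (Fin d')) Y]

local notation "E" => EuclideanSpace ℝ (Fin d')


lemma combC {E' : Type*} [NormedAddCommGroup E'] [NormedSpace ℝ E']
    (pA pC pL pR : ℝ → E') (hA : Continuous pA) (hC : Continuous pC)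
    (hL : Continuous pL) (hR : Continuous pR) :
    Continuous (fun p : ℝ × ℝ =>
      (1 - p.2) • pL p.1 + p.2 • pR p.1 + (1 - p.1) • pA p.2 + p.1 • pC p.2
        - ((1 - p.1) * (1 - p.2)) • pA 0 - ((1 - p.1) * p.2) • pA 1
        - (p.1 * (1 - p.2)) • pC 0 - (p.1 * p.2) • pC 1) := by fun_prop

lemma coons_bound {E' : Type*} [NormedAddCommGroup E'] [NormedSpace ℝ E']
    {w : E'} {ρ : ℝ} (hρ : 0 < ρ) (v1 v2 v3 v4 v5 v6 v7 v8 : E')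
    (h1 : ‖v1 - w‖ ≤ ρ/4) (h2 : ‖v2 - w‖ ≤ ρ/4) (h3 : ‖v3 - w‖ ≤ ρ/4)
    (h4 : ‖v4 - w‖ ≤ ρ/4) (h5 : ‖v5 - w‖ ≤ ρ/4) (h6 : ‖v6 - w‖ ≤ ρ/4)
    (h7 : ‖v7 - w‖ ≤ ρ/4) (h8 : ‖v8 - w‖ ≤ ρ/4)
    {s u : ℝ} (hs0 : 0 ≤ s) (hs1 : s ≤ 1) (hu0 : 0 ≤ u) (hu1 : u ≤ 1) :
    ‖((1 - u) • v1 + u • v2 + (1 - s) • v3 + s • v4 - ((1 - s) * (1 - u)) • v5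
      - ((1 - s) * u) • v6 - (s * (1 - u)) • v7 - (s * u) • v8) - w‖ < ρ := by
  have key : ((1 - u) • v1 + u • v2 + (1 - s) • v3 + s • v4 - ((1 - s) * (1 - u)) • v5
      - ((1 - s) * u) • v6 - (s * (1 - u)) • v7 - (s * u) • v8) - w =
      (1 - u) • (v1 - w) + u • (v2 - w) + (1 - s) • (v3 - w) + s • (v4 - w)
        - ((1 - s) * (1 - u)) • (v5 - w) - ((1 - s) * u) • (v6 - w)
        - (s * (1 - u)) • (v7 - w) - (s * u) • (v8 - w) := by module
  rw [key]
  set a1 := (1 - u) • (v1 - w)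
  set a2 := u • (v2 - w)
  set a3 := (1 - s) • (v3 - w)
  set a4 := s • (v4 - w)
  set a5 := ((1 - s) * (1 - u)) • (v5 - w)
  set a6 := ((1 - s) * u) • (v6 - w)
  set a7 := (s * (1 - u)) • (v7 - w)
  set a8 := (s * u) • (v8 - w)
  have t1 : ‖a1 + a2‖ ≤ ‖a1‖ + ‖a2‖ := norm_add_le _ _
  have t2 : ‖a1 + a2 + a3‖ ≤ ‖a1 + a2‖ + ‖a3‖ := norm_add_le _ _
  have t3 : ‖a1 + a2 + a3 + a4‖ ≤ ‖a1 + a2 + a3‖ + ‖a4‖ := norm_add_le _ _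
  have t4 : ‖a1 + a2 + a3 + a4 - a5‖ ≤ ‖a1 + a2 + a3 + a4‖ + ‖a5‖ := norm_sub_le _ _
  have t5 : ‖a1 + a2 + a3 + a4 - a5 - a6‖ ≤ ‖a1 + a2 + a3 + a4 - a5‖ + ‖a6‖ := norm_sub_le _ _
  have t6 : ‖a1 + a2 + a3 + a4 - a5 - a6 - a7‖ ≤ ‖a1 + a2 + a3 + a4 - a5 - a6‖ + ‖a7‖ :=
    norm_sub_le _ _
  have t7 : ‖a1 + a2 + a3 + a4 - a5 - a6 - a7 - a8‖ ≤ ‖a1 + a2 + a3 + a4 - a5 - a6 - a7‖ + ‖a8‖ :=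
    norm_sub_le _ _
  have n1 : ‖a1‖ ≤ (1 - u) * (ρ/4) := by
    rw [norm_smul, Real.norm_eq_abs, abs_of_nonneg (by linarith)]
    exact mul_le_mul_of_nonneg_left h1 (by linarith)
  have n2 : ‖a2‖ ≤ u * (ρ/4) := by
    rw [norm_smul, Real.norm_eq_abs, abs_of_nonneg hu0]
    exact mul_le_mul_of_nonneg_left h2 hu0
  have n3 : ‖a3‖ ≤ (1 - s) * (ρ/4) := by
    rw [norm_smul, Real.norm_eq_abs, abs_of_nonneg (by linarith)]
    exact mul_le_mul_of_nonneg_left h3 (by linarith)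
  have n4 : ‖a4‖ ≤ s * (ρ/4) := by
    rw [norm_smul, Real.norm_eq_abs, abs_of_nonneg hs0]
    exact mul_le_mul_of_nonneg_left h4 hs0
  have n5 : ‖a5‖ ≤ ((1 - s) * (1 - u)) * (ρ/4) := by
    rw [norm_smul, Real.norm_eq_abs, abs_of_nonneg (by nlinarith)]
    exact mul_le_mul_of_nonneg_left h5 (by nlinarith)
  have n6 : ‖a6‖ ≤ ((1 - s) * u) * (ρ/4) := by
    rw [norm_smul, Real.norm_eq_abs, abs_of_nonneg (by nlinarith)]
    exact mul_le_mul_of_nonneg_left h6 (by nlinarith)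
  have n7 : ‖a7‖ ≤ (s * (1 - u)) * (ρ/4) := by
    rw [norm_smul, Real.norm_eq_abs, abs_of_nonneg (by nlinarith)]
    exact mul_le_mul_of_nonneg_left h7 (by nlinarith)
  have n8 : ‖a8‖ ≤ (s * u) * (ρ/4) := by
    rw [norm_smul, Real.norm_eq_abs, abs_of_nonneg (by nlinarith)]
    exact mul_le_mul_of_nonneg_left h8 (by nlinarith)
  nlinarith [t1, t2, t3, t4, t5, t6, t7, n1, n2, n3, n4, n5, n6, n7, n8,
    norm_nonneg a1, norm_nonneg a8]

/-- Fill a rectangle in a chart ball (Coons patch). -/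
lemma rect (ψ : OpenPartialHomeomorph Y E) {ρ : ℝ} (hρ : 0 < ρ) {w : E}
    (hsub : ball w ρ ⊆ ψ.target)
    (A Cc L R : ℝ → Y)
    (hA : Continuous A) (hC : Continuous Cc) (hL : Continuous L) (hR : Continuous R)
    (hAcl : ∀ t, A t = A (cl t)) (hCcl : ∀ t, Cc t = Cc (cl t))
    (hLcl : ∀ t, L t = L (cl t)) (hRcl : ∀ t, R t = R (cl t))
    (hAU : ∀ t, A t ∈ ψ.source ∧ ψ (A t) ∈ ball w (ρ/4))
    (hCU : ∀ t, Cc t ∈ ψ.source ∧ ψ (Cc t) ∈ ball w (ρ/4))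
    (hLU : ∀ t, L t ∈ ψ.source ∧ ψ (L t) ∈ ball w (ρ/4))
    (hRU : ∀ t, R t ∈ ψ.source ∧ ψ (R t) ∈ ball w (ρ/4))
    (hL0 : L 0 = A 0) (hR0 : R 0 = A 1) (hL1 : L 1 = Cc 0) (hR1 : R 1 = Cc 1) :
    ∃ Rm : ℝ × ℝ → Y, Continuous Rm ∧ (∀ u, Rm (0, u) = A u) ∧ (∀ u, Rm (1, u) = Cc u) ∧
      (∀ s, Rm (s, 0) = L s) ∧ (∀ s, Rm (s, 1) = R s) := by
  obtain ⟨pA, hpAc, hpAeq⟩ : ∃ p : ℝ → E, Continuous p ∧ ∀ t, p t = ψ (A t) :=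
    ⟨_, ψ.continuousOn.comp_continuous hA (fun t => (hAU t).1), fun _ => rfl⟩
  obtain ⟨pC, hpCc, hpCeq⟩ : ∃ p : ℝ → E, Continuous p ∧ ∀ t, p t = ψ (Cc t) :=
    ⟨_, ψ.continuousOn.comp_continuous hC (fun t => (hCU t).1), fun _ => rfl⟩
  obtain ⟨pL, hpLc, hpLeq⟩ : ∃ p : ℝ → E, Continuous p ∧ ∀ t, p t = ψ (L t) :=
    ⟨_, ψ.continuousOn.comp_continuous hL (fun t => (hLU t).1), fun _ => rfl⟩
  obtain ⟨pR, hpRc, hpReq⟩ : ∃ p : ℝ → E, Continuous p ∧ ∀ t, p t = ψ (R t) :=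
    ⟨_, ψ.continuousOn.comp_continuous hR (fun t => (hRU t).1), fun _ => rfl⟩
  have hG : ∃ G : ℝ × ℝ → E, Continuous G ∧ ∀ s u : ℝ, G (s, u) =
      (1 - u) • pL s + u • pR s + (1 - s) • pA u + s • pC u
        - ((1 - s) * (1 - u)) • pA 0 - ((1 - s) * u) • pA 1
        - (s * (1 - u)) • pC 0 - (s * u) • pC 1 :=
    ⟨fun p =>
      (1 - p.2) • pL p.1 + p.2 • pR p.1 + (1 - p.1) • pA p.2 + p.1 • pC p.2
        - ((1 - p.1) * (1 - p.2)) • pA 0 - ((1 - p.1) * p.2) • pA 1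
        - (p.1 * (1 - p.2)) • pC 0 - (p.1 * p.2) • pC 1,
      combC pA pC pL pR hpAc hpCc hpLc hpRc, fun s u => rfl⟩
  obtain ⟨G, hGc, hGeq⟩ := hG
  have hGball : ∀ s u : ℝ, s ∈ Icc (0:ℝ) 1 → u ∈ Icc (0:ℝ) 1 → G (s, u) ∈ ball w ρ := by
    rintro s u ⟨hs0, hs1⟩ ⟨hu0, hu1⟩
    rw [mem_ball, dist_eq_norm, hGeq]
    have hd : ∀ (v : Y), (v ∈ ψ.source ∧ ψ v ∈ ball w (ρ/4)) → ‖ψ v - w‖ ≤ ρ/4 :=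
      fun v hv => le_of_lt (by simpa [dist_eq_norm] using hv.2)
    rw [hpAeq, hpAeq, hpAeq, hpCeq, hpCeq, hpCeq, hpLeq, hpReq]
    exact coons_bound hρ (ψ (L s)) (ψ (R s)) (ψ (A u)) (ψ (Cc u))
      (ψ (A 0)) (ψ (A 1)) (ψ (Cc 0)) (ψ (Cc 1))
      (hd _ (hLU s)) (hd _ (hRU s)) (hd _ (hAU u)) (hd _ (hCU u))
      (hd _ (hAU 0)) (hd _ (hAU 1)) (hd _ (hCU 0)) (hd _ (hCU 1)) hs0 hs1 hu0 hu1
  have hFball : ∀ p : ℝ × ℝ, G (cl p.1, cl p.2) ∈ ball w ρ :=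
    fun p => hGball _ _ (cl_mem p.1) (cl_mem p.2)
  have e1 : pL 0 = pA 0 := by rw [hpLeq, hL0, hpAeq]
  have e2 : pR 0 = pA 1 := by rw [hpReq, hR0, hpAeq]
  have e3 : pL 1 = pC 0 := by rw [hpLeq, hL1, hpCeq]
  have e4 : pR 1 = pC 1 := by rw [hpReq, hR1, hpCeq]
  refine ⟨fun p => ψ.symm (G (cl p.1, cl p.2)), ?_, ?_, ?_, ?_, ?_⟩
  · apply ψ.continuousOn_symm.comp_continuous _ (fun p => hsub (hFball p))
    exact hGc.comp ((cl_continuous.comp continuous_fst).prodMk (cl_continuous.comp continuous_snd))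
  · intro u
    have h : G (cl 0, cl u) = pA (cl u) := by rw [cl_zero, hGeq, e1, e2]; module
    show ψ.symm (G (cl 0, cl u)) = A u
    rw [h, hpAeq, ψ.left_inv (hAU (cl u)).1]
    exact (hAcl u).symm
  · intro u
    have h : G (cl 1, cl u) = pC (cl u) := by rw [cl_one, hGeq, e3, e4]; module
    show ψ.symm (G (cl 1, cl u)) = Cc u
    rw [h, hpCeq, ψ.left_inv (hCU (cl u)).1]
    exact (hCcl u).symm
  · intro s
    have h : G (cl s, cl 0) = pL (cl s) := by rw [cl_zero, hGeq]; module
    show ψ.symm (G (cl s, cl 0)) = L s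
    rw [h, hpLeq, ψ.left_inv (hLU (cl s)).1]
    exact (hLcl s).symm
  · intro s
    have h : G (cl s, cl 1) = pR (cl s) := by rw [cl_one, hGeq]; module
    show ψ.symm (G (cl s, cl 1)) = R s
    rw [h, hpReq, ψ.left_inv (hRU (cl s)).1]
    exact (hRcl s).symm

lemma setup (S : Set Y) (hS : IsCompact S) :
    ∃ ε, 0 < ε ∧ ∃ η, 0 < η ∧ η ≤ ε/8 ∧
      (∀ z ∈ S, ∃ (ψ : OpenPartialHomeomorph Y E) (w : E) (ρ : ℝ), 0 < ρ ∧
          ball w ρ ⊆ ψ.target ∧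
          ball z ε ⊆ ψ.source ∩ ψ ⁻¹' (ball w (ρ/4))) ∧
      (∀ w z : Y, z ∈ S → dist w z < η → ∃ p : ℝ → Y, Continuous p ∧ p 0 = w ∧ p 1 = z ∧
          (∀ s, p s = p (cl s)) ∧ ∀ s, dist (p s) z < ε/4) := by
  have hchart : ∀ y : Y, ∃ ρ, 0 < ρ ∧ ball (chartAt E y y) ρ ⊆ (chartAt E y).target := by
    intro y
    have h1 : chartAt E y y ∈ (chartAt E y).target :=
      (chartAt E y).map_source (mem_chart_source E y)
    rcases Metric.isOpen_iff.1 (chartAt E y).open_target _ h1 with ⟨ρ, hρ, hsub⟩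
    exact ⟨ρ, hρ, hsub⟩
  choose ρ ρpos ρsub using hchart
  have hUopen : ∀ y : Y, IsOpen ((chartAt E y).source ∩
      (chartAt E y) ⁻¹' (ball (chartAt E y y) (ρ y / 4))) :=
    fun y => (chartAt E y).isOpen_inter_preimage isOpen_ball
  have hyU : ∀ y : Y, y ∈ (chartAt E y).source ∩
      (chartAt E y) ⁻¹' (ball (chartAt E y y) (ρ y / 4)) := by
    intro y
    refine ⟨mem_chart_source E y, ?_⟩
    simp only [mem_preimage, mem_ball, dist_self]
    have := ρpos y
    linarith
  obtain ⟨ε, εpos, hεU⟩ := lebesgue_number_lemma_of_metric (ι := S) hS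
    (fun y => hUopen y) (fun z hz => mem_iUnion.2 ⟨⟨z, hz⟩, hyU z⟩)
  have hτ : ∀ y : Y, ∃ τ, 0 < τ ∧ τ ≤ ρ y / 4 ∧ ∀ z ∈ (chartAt E y).source,
      dist (chartAt E y z) (chartAt E y y) < τ → dist z y < ε/8 := by
    intro y
    have hmem : chartAt E y y ∈ (chartAt E y).symm.source := by
      rw [OpenPartialHomeomorph.symm_source]
      exact (chartAt E y).map_source (mem_chart_source E y)
    have hca : ContinuousAt (chartAt E y).symm (chartAt E y y) :=
      (chartAt E y).symm.continuousAt hmem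
    obtain ⟨δ, δpos, hδ⟩ := Metric.continuousAt_iff.1 hca (ε/8) (by linarith)
    refine ⟨min δ (ρ y / 4), lt_min δpos (by linarith [ρpos y]), min_le_right _ _, ?_⟩
    intro z hz hdz
    have h2 := hδ (lt_of_lt_of_le hdz (min_le_left _ _))
    rwa [(chartAt E y).left_inv hz, (chartAt E y).left_inv (mem_chart_source E y)] at h2
  choose τ τpos τle hτball using hτ
  have hVopen : ∀ y : Y, IsOpen ((chartAt E y).source ∩
      (chartAt E y) ⁻¹' (ball (chartAt E y y) (τ y))) :=
    fun y => (chartAt E y).isOpen_inter_preimage isOpen_ball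
  have hyV : ∀ y : Y, y ∈ (chartAt E y).source ∩
      (chartAt E y) ⁻¹' (ball (chartAt E y y) (τ y)) := by
    intro y
    refine ⟨mem_chart_source E y, ?_⟩
    simp only [mem_preimage, mem_ball, dist_self]
    exact τpos y
  obtain ⟨η₀, η₀pos, hηV⟩ := lebesgue_number_lemma_of_metric (ι := S) hS
    (fun y => hVopen y) (fun z hz => mem_iUnion.2 ⟨⟨z, hz⟩, hyV z⟩)
  refine ⟨ε, εpos, min η₀ (ε/8), lt_min η₀pos (by linarith), min_le_right _ _, ?_, ?_⟩
  · intro z hz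
    obtain ⟨y, hy⟩ := hεU z hz
    exact ⟨chartAt E (y : Y), chartAt E (y : Y) (y : Y), ρ y, ρpos y, ρsub y, hy⟩
  · intro w z hz hwz
    obtain ⟨y, hy⟩ := hηV z hz
    set ψ := chartAt E (y : Y) with hψ
    have hzV : z ∈ ψ.source ∩ ψ ⁻¹' (ball (ψ (y : Y)) (τ y)) := hy (mem_ball_self η₀pos)
    have hwV : w ∈ ψ.source ∩ ψ ⁻¹' (ball (ψ (y : Y)) (τ y)) :=
      hy (mem_ball.2 (lt_of_lt_of_le hwz (min_le_left _ _)))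
    have hτρ : ball (ψ (y : Y)) (τ y) ⊆ ψ.target := by
      refine subset_trans (ball_subset_ball ?_) (ρsub y)
      linarith [τle y, ρpos y]
    have mseg : ∀ s : ℝ, (1 - cl s) • ψ w + cl s • ψ z ∈ ball (ψ (y : Y)) (τ y) := by
      intro s
      exact (convex_ball (ψ (y : Y)) (τ y)) hwV.2 hzV.2 (by linarith [(cl_mem s).2])
        (cl_mem s).1 (by ring)
    have hdy : ∀ s : ℝ, dist (ψ.symm ((1 - cl s) • ψ w + cl s • ψ z)) (y : Y) < ε/8 := by
      intro s
      apply hτball y _ (ψ.map_target (hτρ (mseg s)))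
      rw [ψ.right_inv (hτρ (mseg s))]
      exact mseg s
    have hdzy : dist z (y : Y) < ε/8 := hτball y z hzV.1 hzV.2
    refine ⟨fun s => ψ.symm ((1 - cl s) • ψ w + cl s • ψ z), ?_, ?_, ?_, ?_, ?_⟩
    · apply ψ.continuousOn_symm.comp_continuous _ (fun s => hτρ (mseg s))
      have : Continuous fun s : ℝ => (1 - cl s) • ψ w + cl s • ψ z := by
        have := cl_continuous
        fun_prop
      exact this
    · show ψ.symm ((1 - cl 0) • ψ w + cl 0 • ψ z) = w
      have h0 : (1 - cl 0) • ψ w + cl 0 • ψ z = ψ w := by rw [cl_zero]; module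
      rw [h0, ψ.left_inv hwV.1]
    · show ψ.symm ((1 - cl 1) • ψ w + cl 1 • ψ z) = z
      have h1 : (1 - cl 1) • ψ w + cl 1 • ψ z = ψ z := by rw [cl_one]; module
      rw [h1, ψ.left_inv hzV.1]
    · intro s
      show ψ.symm ((1 - cl s) • ψ w + cl s • ψ z)
        = ψ.symm ((1 - cl (cl s)) • ψ w + cl (cl s) • ψ z)
      rw [cl_cl]
    · intro s
      calc dist (ψ.symm ((1 - cl s) • ψ w + cl s • ψ z)) z
          ≤ dist (ψ.symm ((1 - cl s) • ψ w + cl s • ψ z)) (y : Y) + dist (y : Y) z :=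
            dist_triangle _ _ _
        _ < ε/8 + ε/8 := by
            have := hdy s
            have := hdzy
            rw [dist_comm (y : Y) z]
            linarith
        _ = ε/4 := by ring

lemma cl_of_nonpos {t : ℝ} (h : t ≤ 0) : cl t = 0 := by
  simp only [cl]
  rw [max_eq_left]
  exact le_trans (min_le_right _ _) h

lemma cl_of_ge {t : ℝ} (h : 1 ≤ t) : cl t = 1 := by
  simp [cl, min_eq_left h]

lemma arith1 {J N u : ℝ} (hJ : 1 ≤ J) (hN : 0 < N) (hle : u * (J+1) ≤ J) :
    cl (u * (J+1) / J) * (J/N) = cl u * ((J+1)/N) := by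
  rcases le_or_gt u 0 with h | h
  · rw [cl_of_nonpos (div_nonpos_of_nonpos_of_nonneg (by nlinarith) (by linarith)),
      cl_of_nonpos h]
    ring
  · have hu1 : u ≤ 1 := by nlinarith
    have h2 : u * (J+1) / J ≤ 1 := by
      rw [div_le_one (by linarith)]; linarith
    have h3 : 0 ≤ u * (J+1) / J := by positivity
    rw [cl_of_mem h3 h2, cl_of_mem (le_of_lt h) hu1]
    field_simp

lemma arith2 {J N u : ℝ} (hJ : 1 ≤ J) (hgt : J < u * (J+1)) :
    J/N + cl (u * (J+1) - J)/N = cl u * ((J+1)/N) := by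
  have hu0 : 0 < u := by nlinarith
  rcases le_or_gt u 1 with h | h
  · have h1 : u * (J+1) - J ≤ 1 := by nlinarith
    rw [cl_of_mem (by linarith) h1, cl_of_mem (le_of_lt hu0) h]
    ring
  · have h1 : 1 ≤ u * (J+1) - J := by nlinarith
    rw [cl_of_ge h1, cl_of_ge (le_of_lt h)]
    ring

include cs in
lemma key (S : Set Y) (hS : IsCompact S) :
    ∃ η, 0 < η ∧ ∀ a c : ℝ → Y, Continuous a → Continuous c →
      (∀ t, a t = a (cl t)) → (∀ t, c t = c (cl t)) →
      (∀ t, c t ∈ S) → (∀ t, dist (a t) (c t) < η) →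
      a 0 = a 1 → c 0 = c 1 →
      FreelyHomotopicLoops (fun t : unitInterval => a t) (fun t : unitInterval => c t) := by
  classical
  obtain ⟨ε, εpos, η, ηpos, ηle, hcharts, hpaths⟩ := setup (d' := d') S hS
  refine ⟨η, ηpos, ?_⟩
  intro a c ha hc hacl hccl hcS hd ha01 hc01
  -- uniform continuity of c on [0,1]
  have huc : UniformContinuousOn c (Icc 0 1) :=
    isCompact_Icc.uniformContinuousOn_of_continuous hc.continuousOn
  obtain ⟨δ, δpos, hδ⟩ := Metric.uniformContinuousOn_iff.1 huc η ηpos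
  obtain ⟨n, hn⟩ := exists_nat_gt (1/δ)
  have hnpos : 0 < n := by
    by_contra hcon
    push_neg at hcon
    interval_cases n
    simp at hn
    have : 0 < 1/δ := by positivity
    linarith
  have hnR : (0:ℝ) < n := by exact_mod_cast hnpos
  have hstep : ∀ t t' : ℝ, t ∈ Icc (0:ℝ) 1 → t' ∈ Icc (0:ℝ) 1 → |t - t'| ≤ 1/n →
      dist (c t) (c t') < η := by
    intro t t' ht ht' habs
    apply hδ t ht t' ht'
    rw [Real.dist_eq]
    have h1n : (1:ℝ)/n < δ := by
      rw [div_lt_iff₀ hnR]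
      rw [div_lt_iff₀ δpos] at hn
      linarith [mul_comm δ (n:ℝ)]
    linarith
  set T : ℕ → ℝ := fun i => cl (i / n) with hT
  have hTval : ∀ i : ℕ, i ≤ n → T i = i / n := by
    intro i hi
    apply cl_of_mem (by positivity)
    rw [div_le_one hnR]
    exact_mod_cast hi
  have hT0 : T 0 = 0 := by simp [hT, cl_of_mem le_rfl zero_le_one]
  have hTn : T n = 1 := by
    rw [hTval n le_rfl, div_self (ne_of_gt hnR)]
  have hTmem : ∀ i : ℕ, T i ∈ Icc (0:ℝ) 1 := fun i => cl_mem _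
  -- the connecting paths
  have hσex : ∀ i : ℕ, ∃ p : ℝ → Y, Continuous p ∧ p 0 = a (T i) ∧ p 1 = c (T i) ∧
      (∀ s, p s = p (cl s)) ∧ ∀ s, dist (p s) (c (T i)) < ε/4 :=
    fun i => hpaths (a (T i)) (c (T i)) (hcS _) (lt_of_lt_of_le (hd _) (by linarith))
  choose σb σbc σb0 σb1 σbcl σbball using hσex
  set sg : ℕ → ℝ → Y := fun i => σb (i % n) with hσdef
  have hσn0 : sg n = sg 0 := by
    simp only [hσdef, Nat.mod_self, Nat.zero_mod]
  have hσc : ∀ i, Continuous (sg i) := fun i => σbc _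
  have hσcl : ∀ i s, sg i s = sg i (cl s) := fun i s => σbcl _ s
  have hσ0 : ∀ i, i ≤ n → sg i 0 = a (T i) := by
    intro i hi
    rcases lt_or_eq_of_le hi with h | h
    · simp only [hσdef, Nat.mod_eq_of_lt h]
      exact σb0 i
    · subst h
      rw [hσn0]
      simp only [hσdef, Nat.zero_mod]
      rw [σb0 0, hT0, hTn, ha01]
  have hσ1 : ∀ i, i ≤ n → sg i 1 = c (T i) := by
    intro i hi
    rcases lt_or_eq_of_le hi with h | h
    · simp only [hσdef, Nat.mod_eq_of_lt h]
      exact σb1 i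
    · subst h
      rw [hσn0]
      simp only [hσdef, Nat.zero_mod]
      rw [σb1 0, hT0, hTn, hc01]
  have hσball : ∀ i, i ≤ n → ∀ s, dist (sg i s) (c (T i)) < ε/4 := by
    intro i hi s
    rcases lt_or_eq_of_le hi with h | h
    · simp only [hσdef, Nat.mod_eq_of_lt h]
      exact σbball i s
    · subst h
      rw [hσn0]
      simp only [hσdef, Nat.zero_mod]
      rw [hTn, ← hc01, ← hT0]
      exact σbball 0 s
  -- the rectangles
  have hrect : ∀ i : ℕ, i < n → ∃ R : ℝ × ℝ → Y, Continuous R ∧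
      (∀ u, R (0, u) = a (T i + cl u / n)) ∧ (∀ u, R (1, u) = c (T i + cl u / n)) ∧
      (∀ s, R (s, 0) = sg i s) ∧ (∀ s, R (s, 1) = sg (i+1) s) := by
    intro i hi
    obtain ⟨ψ, w, ρ, hρ, hsub, hball⟩ := hcharts (c (T i)) (hcS _)
    have hin : ∀ t : ℝ, T i + cl t / n ∈ Icc (0:ℝ) 1 := by
      intro t
      constructor
      · have h1 := (hTmem i).1
        have h2 := (cl_mem t).1
        positivity
      · rw [hTval i (le_of_lt hi)]
        have h3 : ((i:ℝ) + cl t)/n ≤ ((i:ℝ)+1)/n := by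
          gcongr
          exact (cl_mem t).2
        have h4 : ((i:ℝ)+1)/n ≤ 1 := by
          rw [div_le_one hnR]
          have : ((i:ℝ)+1) = ((i+1 : ℕ) : ℝ) := by push_cast; ring
          rw [this]
          exact_mod_cast hi
        calc (i:ℝ)/n + cl t / n = ((i:ℝ) + cl t)/n := by ring
          _ ≤ 1 := le_trans h3 h4
    have hosc : ∀ t : ℝ, dist (c (T i + cl t / n)) (c (T i)) < η := by
      intro t
      apply hstep _ _ (hin t) (hTmem i)
      have he : T i + cl t / n - T i = cl t / n := by ring
      rw [he, abs_of_nonneg (div_nonneg (cl_mem t).1 (le_of_lt hnR))]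
      have : cl t / n ≤ 1 / n := by
        gcongr
        exact (cl_mem t).2
      exact this
    have hAmem : ∀ t : ℝ, a (T i + cl t / n) ∈ ball (c (T i)) ε := by
      intro t
      rw [mem_ball]
      calc dist (a (T i + cl t / n)) (c (T i))
          ≤ dist (a (T i + cl t / n)) (c (T i + cl t / n))
            + dist (c (T i + cl t / n)) (c (T i)) := dist_triangle _ _ _
        _ < η + η := add_lt_add (hd _) (hosc t)
        _ ≤ ε := by linarith
    have hCmem : ∀ t : ℝ, c (T i + cl t / n) ∈ ball (c (T i)) ε := by
      intro t
      rw [mem_ball]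
      calc dist (c (T i + cl t / n)) (c (T i)) < η := hosc t
        _ ≤ ε := by linarith
    have hLmem : ∀ s : ℝ, sg i s ∈ ball (c (T i)) ε := by
      intro s
      rw [mem_ball]
      calc dist (sg i s) (c (T i)) < ε/4 := hσball i (le_of_lt hi) s
        _ ≤ ε := by linarith
    have hTd : dist (c (T (i+1))) (c (T i)) < η := by
      apply hstep _ _ (hTmem (i+1)) (hTmem i)
      rw [hTval (i+1) hi, hTval i (le_of_lt hi)]
      have he : ((i+1 : ℕ) : ℝ)/n - (i:ℝ)/n = 1/n := by push_cast; ring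
      rw [he, abs_of_nonneg (by positivity)]
    have hRmem : ∀ s : ℝ, sg (i+1) s ∈ ball (c (T i)) ε := by
      intro s
      rw [mem_ball]
      calc dist (sg (i+1) s) (c (T i))
          ≤ dist (sg (i+1) s) (c (T (i+1))) + dist (c (T (i+1))) (c (T i)) := dist_triangle _ _ _
        _ < ε/4 + η := add_lt_add (hσball (i+1) hi s) hTd
        _ ≤ ε := by linarith
    have mk : ∀ x : Y, x ∈ ball (c (T i)) ε → x ∈ ψ.source ∧ ψ x ∈ ball w (ρ/4) :=
      fun x hx => ⟨(hball hx).1, (hball hx).2⟩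
    have hTadd : T (i+1) = T i + 1/n := by
      rw [hTval (i+1) hi, hTval i (le_of_lt hi)]
      push_cast
      ring
    refine rect ψ hρ hsub
      (fun u => a (T i + cl u / n)) (fun u => c (T i + cl u / n)) (sg i) (sg (i+1))
      (ha.comp (by have := cl_continuous; fun_prop))
      (hc.comp (by have := cl_continuous; fun_prop))
      (hσc i) (hσc (i+1))
      (fun t => by show a (T i + cl t / n) = a (T i + cl (cl t) / n); rw [cl_cl])
      (fun t => by show c (T i + cl t / n) = c (T i + cl (cl t) / n); rw [cl_cl])
      (hσcl i) (hσcl (i+1))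
      (fun t => mk _ (hAmem t)) (fun t => mk _ (hCmem t))
      (fun t => mk _ (hLmem t)) (fun t => mk _ (hRmem t))
      ?_ ?_ ?_ ?_
    · show sg i 0 = a (T i + cl 0 / n)
      rw [cl_zero, zero_div, add_zero]
      exact hσ0 i (le_of_lt hi)
    · show sg (i+1) 0 = a (T i + cl 1 / n)
      rw [cl_one, hσ0 (i+1) hi, hTadd]
    · show sg i 1 = c (T i + cl 0 / n)
      rw [cl_zero, zero_div, add_zero]
      exact hσ1 i (le_of_lt hi)
    · show sg (i+1) 1 = c (T i + cl 1 / n)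
      rw [cl_one, hσ1 (i+1) hi, hTadd]
  -- glue the rectangles
  have hglue : ∀ j : ℕ, 1 ≤ j → j ≤ n → ∃ Sj : ℝ × ℝ → Y, Continuous Sj ∧
      (∀ u, Sj (0, u) = a (cl u * (j/n))) ∧ (∀ u, Sj (1, u) = c (cl u * (j/n))) ∧
      (∀ s, Sj (s, 0) = sg 0 s) ∧ (∀ s, Sj (s, 1) = sg j s) := by
    intro j
    induction j with
    | zero => omega
    | succ j ih =>
      intro _ hjn
      rcases Nat.eq_zero_or_pos j with hj0 | hjpos
      · subst hj0
        obtain ⟨R, hRc, hR0, hR1, hRs0, hRs1⟩ := hrect 0 (by omega)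
        refine ⟨R, hRc, ?_, ?_, ?_, ?_⟩
        · intro u
          rw [hR0 u, hT0]
          congr 1
          push_cast
          ring
        · intro u
          rw [hR1 u, hT0]
          congr 1
          push_cast
          ring
        · exact hRs0
        · exact hRs1
      · obtain ⟨Sj, hSc, hS0, hS1, hSs0, hSs1⟩ := ih hjpos (by omega)
        obtain ⟨R, hRc, hR0, hR1, hRs0, hRs1⟩ := hrect j (by omega)
        have hjR : (1:ℝ) ≤ (j:ℝ) := by exact_mod_cast hjpos
        have hjne : (j:ℝ) ≠ 0 := by positivity
        refine ⟨fun p => if p.2 * ((j:ℝ)+1) ≤ (j:ℝ) then Sj (p.1, cl (p.2 * ((j:ℝ)+1) / j))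
          else R (p.1, cl (p.2 * ((j:ℝ)+1) - j)), ?_, ?_, ?_, ?_, ?_⟩
        · apply Continuous.if_le
          · apply hSc.comp
            apply continuous_fst.prodMk
            have := cl_continuous
            fun_prop
          · apply hRc.comp
            apply continuous_fst.prodMk
            have := cl_continuous
            fun_prop
          · fun_prop
          · fun_prop
          · rintro ⟨s, u⟩ hsu
            simp only at hsu ⊢
            rw [hsu]
            rw [div_self hjne, cl_one, sub_self, cl_zero, hSs1, hRs0]
        · intro u
          by_cases hle : u * ((j:ℝ)+1) ≤ (j:ℝ)
          · simp only [hle, if_true]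
            rw [hS0]
            congr 1
            rw [cl_cl]
            have harith := arith1 (N := (n:ℝ)) hjR hnR hle
            push_cast
            push_cast at harith
            linarith
          · simp only [hle, if_false]
            rw [hR0]
            rw [hTval j (by omega)]
            congr 1
            rw [cl_cl]
            have harith := arith2 (N := (n:ℝ)) hjR (lt_of_not_ge hle)
            push_cast
            push_cast at harith
            linarith
        · intro u
          by_cases hle : u * ((j:ℝ)+1) ≤ (j:ℝ)
          · simp only [hle, if_true]
            rw [hS1]
            congr 1
            rw [cl_cl]
            have harith := arith1 (N := (n:ℝ)) hjR hnR hle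
            push_cast
            push_cast at harith
            linarith
          · simp only [hle, if_false]
            rw [hR1]
            rw [hTval j (by omega)]
            congr 1
            rw [cl_cl]
            have harith := arith2 (N := (n:ℝ)) hjR (lt_of_not_ge hle)
            push_cast
            push_cast at harith
            linarith
        · intro s
          have h0 : (0:ℝ) * ((j:ℝ)+1) ≤ (j:ℝ) := by
            rw [zero_mul]; positivity
          simp only [h0, if_true]
          rw [zero_mul, zero_div, cl_zero, hSs0]
        · intro s
          have h1 : ¬((1:ℝ) * ((j:ℝ)+1) ≤ (j:ℝ)) := by
            rw [one_mul]
            push_neg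
            linarith
          simp only [h1, if_false]
          rw [one_mul, add_sub_cancel_left, cl_one, hRs1]
  -- conclude
  obtain ⟨M, hMc, hM0, hM1, hMs0, hMs1⟩ := hglue n hnpos le_rfl
  refine ⟨fun p => M (p.1.1, p.2.1), ?_, ?_, ?_, ?_⟩
  · exact hMc.comp ((continuous_subtype_val.comp continuous_fst).prodMk
      (continuous_subtype_val.comp continuous_snd))
  · intro t
    show M (((0:unitInterval) : ℝ), (t:ℝ)) = a t
    rw [Icc.coe_zero, hM0]
    rw [div_self (ne_of_gt hnR), mul_one, cl_of_mem t.2.1 t.2.2]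
  · intro t
    show M (((1:unitInterval) : ℝ), (t:ℝ)) = c t
    rw [Icc.coe_one, hM1]
    rw [div_self (ne_of_gt hnR), mul_one, cl_of_mem t.2.1 t.2.2]
  · intro s
    show M ((s:ℝ), ((0:unitInterval):ℝ)) = M ((s:ℝ), ((1:unitInterval):ℝ))
    rw [Icc.coe_zero, Icc.coe_one, hMs0, hMs1, hσn0]


lemma cl_coe (t : unitInterval) : cl (t : ℝ) = (t : ℝ) := cl_of_mem t.2.1 t.2.2

/-- transitivity of free homotopy of loops -/
lemma FH_trans {Y : Type*} [TopologicalSpace Y] {a b c : unitInterval → Y}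
    (h1 : FreelyHomotopicLoops a b) (h2 : FreelyHomotopicLoops b c) :
    FreelyHomotopicLoops a c := by
  classical
  obtain ⟨H1, hH1c, hH10, hH11, hH1l⟩ := h1
  obtain ⟨H2, hH2c, hH20, hH21, hH2l⟩ := h2
  set pr : ℝ → unitInterval := Set.projIcc 0 1 zero_le_one with hpr
  refine ⟨fun p => if (p.1 : ℝ) ≤ 1/2 then H1 (pr (2 * p.1), p.2) else H2 (pr (2 * p.1 - 1), p.2),
    ?_, ?_, ?_, ?_⟩
  · apply Continuous.if_le
    · exact hH1c.comp ((continuous_projIcc.comp (by fun_prop)).prodMk continuous_snd)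
    · exact hH2c.comp ((continuous_projIcc.comp (by fun_prop)).prodMk continuous_snd)
    · fun_prop
    · fun_prop
    · rintro ⟨s, t⟩ hs
      simp only at hs ⊢
      rw [hs]
      norm_num
      rw [show pr 1 = 1 by simp [hpr], show pr 0 = 0 by simp [hpr]]
      rw [hH11, hH20]
  · intro t
    simp only [Icc.coe_zero, mul_zero]
    rw [if_pos (by norm_num), show pr 0 = 0 by simp [hpr], hH10]
  · intro t
    simp only [Icc.coe_one, mul_one]
    rw [if_neg (by norm_num), show pr (2 - 1) = 1 by norm_num [hpr], hH21]
  · intro s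
    by_cases h : (s : ℝ) ≤ 1/2 <;> simp only [h, if_pos, if_neg, if_true, if_false] <;>
      [exact hH1l _; exact hH2l _]

lemma FH_symm {Y : Type*} [TopologicalSpace Y] {a b : unitInterval → Y}
    (h : FreelyHomotopicLoops a b) : FreelyHomotopicLoops b a := by
  obtain ⟨H, hc, h0, h1, hl⟩ := h
  exact ⟨fun p => H (unitInterval.symm p.1, p.2),
    hc.comp ((continuous_symm.comp continuous_fst).prodMk continuous_snd),
    fun t => by show H (unitInterval.symm 0, t) = b t; rw [unitInterval.symm_zero]; exact h1 t,
    fun t => by show H (unitInterval.symm 1, t) = a t; rw [unitInterval.symm_one]; exact h0 t,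
    fun s => hl _⟩


lemma FH_comp_homotopy {X Y : Type*} [TopologicalSpace X] [TopologicalSpace Y]
    {r : C(X, X)} (G : (ContinuousMap.id X).Homotopy r) (q : X → Y) (hq : Continuous q)
    {x₀ : X} (γ : Path x₀ x₀) :
    FreelyHomotopicLoops (fun t => q (γ t)) (fun t => q (r (γ t))) := by
  refine ⟨fun p => q (G (p.1, γ p.2)), ?_, ?_, ?_, ?_⟩
  · exact hq.comp (G.continuous.comp (continuous_fst.prodMk
      (γ.continuous.comp continuous_snd)))
  · intro t
    show q (G (0, γ t)) = q (γ t)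
    rw [G.apply_zero]
    rfl
  · intro t
    show q (G (1, γ t)) = q (r (γ t))
    rw [G.apply_one]
  · intro s
    show q (G (s, γ 0)) = q (G (s, γ 1))
    rw [γ.source, γ.target]

end FHaux

open FHaux


end

set_option maxHeartbeats 1000000 in
open FHaux Metric Set in
/-- Let `X` be a topological manifold, `K ⊆ X` a compact connected deformation retract of
`X`, and `(f_k)` a sequence of continuous maps to a (metrizable) manifold `Y` converging
uniformly on `K` to `f`. Then for all large `k` the maps `f_k` and `f` induce the same
homomorphism on `π₁(X, x₀)` for `x₀ ∈ K`: every loop at `x₀` has freely homotopic images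
under `f_k` and `f`. -/
theorem eventually_inducedHom_eq_of_tendstoUniformlyOn {d d' : ℕ}
    {X : Type*} [TopologicalSpace X] [T2Space X]
    [ChartedSpace (EuclideanSpace ℝ (Fin d)) X]
    {Y : Type*} [MetricSpace Y] [ChartedSpace (EuclideanSpace ℝ (Fin d')) Y]
    (K : Set X) (hKcpt : IsCompact K) (hKconn : IsConnected K)
    (hKretr : ∃ r : C(X, X), (∀ x, r x ∈ K) ∧ (∀ x ∈ K, r x = x) ∧
      (ContinuousMap.id X).Homotopic r)
    (f : ℕ → X → Y) (hf : ∀ k, Continuous (f k))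
    (g : X → Y) (hg : Continuous g)
    (hconv : TendstoUniformlyOn f g atTop K)
    (x₀ : X) (hx₀ : x₀ ∈ K) :
    ∀ᶠ k in atTop, ∀ γ : Path x₀ x₀,
      FreelyHomotopicLoops (fun t => f k (γ t)) (fun t => g (γ t)) := by
  obtain ⟨r, hrK, hrid, hhom⟩ := hKretr
  obtain ⟨G⟩ := hhom
  obtain ⟨η, ηpos, hkey⟩ := key (d' := d') (g '' K) (hKcpt.image hg)
  have hev := Metric.tendstoUniformlyOn_iff.1 hconv η ηpos
  filter_upwards [hev] with k hk
  intro γ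
  have h1 : FreelyHomotopicLoops (fun t => f k (γ t)) (fun t => f k (r (γ t))) :=
    FH_comp_homotopy G (f k) (hf k) γ
  have h3 : FreelyHomotopicLoops (fun t => g (γ t)) (fun t => g (r (γ t))) :=
    FH_comp_homotopy G g hg γ
  have hext : ∀ t : ℝ, γ.extend (cl t) = γ.extend t := by
    intro t
    show γ (projIcc 0 1 zero_le_one (cl t)) = γ (projIcc 0 1 zero_le_one t)
    congr 1
    apply Subtype.ext
    rw [Set.coe_projIcc, Set.coe_projIcc]
    exact cl_cl t
  have h2 : FreelyHomotopicLoops (fun t => f k (r (γ t))) (fun t => g (r (γ t))) := by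
    have hres := hkey (fun t => f k (r (γ.extend t))) (fun t => g (r (γ.extend t)))
      ((hf k).comp (r.continuous.comp γ.continuous_extend))
      (hg.comp (r.continuous.comp γ.continuous_extend))
      (fun t => by show f k (r (γ.extend t)) = f k (r (γ.extend (cl t))); rw [hext t])
      (fun t => by show g (r (γ.extend t)) = g (r (γ.extend (cl t))); rw [hext t])
      (fun t => ⟨r (γ.extend t), hrK _, rfl⟩)
      (fun t => by rw [dist_comm]; exact hk (r (γ.extend t)) (hrK _))
      (by show f k (r (γ.extend 0)) = f k (r (γ.extend 1))
          rw [γ.extend_zero, γ.extend_one])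
      (by show g (r (γ.extend 0)) = g (r (γ.extend 1))
          rw [γ.extend_zero, γ.extend_one])
    have heq1 : (fun t : unitInterval => f k (r (γ.extend ↑t)))
        = fun t : unitInterval => f k (r (γ t)) := by
      funext t
      rw [γ.extend_extends']
    have heq2 : (fun t : unitInterval => g (r (γ.extend ↑t)))
        = fun t : unitInterval => g (r (γ t)) := by
      funext t
      rw [γ.extend_extends']
    rw [heq1, heq2] at hres
    exact hres
  exact FH_trans (FH_trans h1 h2) (FH_symm h3)
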